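/- arXiv:2308.13075 — 2 statements merged into one kernel-verified Lean document; each statement's English description precedes it below -/
import Mathlib

section
/- Let (A_ℓ) be a sequence of abelian groups with surjections φ_ℓ : A_ℓ → A_{ℓ+1} having kernel A_ℓ[p], and suppose A_{n₁} ≅ A_{n₂} for some n₂ > n₁ via an isomorphism identifying the composite map φ_{n₁,n₂} with an endomorphism f of C := A_{n₁}. Then ker(f^∘ℓ) = C[p^{(n₂−n₁)ℓ}] for all ℓ ≥ 1, and hence C[p^∞] = C[f^∞]. -/
/-- The composite `φ_{ℓ₁,ℓ₂} : A_{ℓ₁} →+ A_{ℓ₁+k}` of the maps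
`φ_{ℓ,ℓ+1}`. -/
def compMap {A : ℕ → Type*} [∀ ℓ, AddCommGroup (A ℓ)]
    (φ : ∀ ℓ, A ℓ →+ A (ℓ + 1)) (ℓ₁ : ℕ) : ∀ k : ℕ, A ℓ₁ →+ A (ℓ₁ + k)
  | 0 => AddMonoidHom.id _
  | k + 1 => (φ (ℓ₁ + k)).comp (compMap φ ℓ₁ k)

lemma compMap_ker {A : ℕ → Type*} [∀ ℓ, AddCommGroup (A ℓ)] (p : ℕ)
    (φ : ∀ ℓ, A ℓ →+ A (ℓ + 1))
    (hker : ∀ ℓ, ∀ x : A ℓ, φ ℓ x = 0 ↔ p • x = 0)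
    (n₁ : ℕ) : ∀ k : ℕ, ∀ x : A n₁, compMap φ n₁ k x = 0 ↔ p ^ k • x = 0 := by
  intro k
  induction k with
  | zero => intro x; simp [compMap]
  | succ k ih =>
    intro x
    have : compMap φ n₁ (k + 1) x = φ (n₁ + k) (compMap φ n₁ k x) := rfl
    rw [this, hker, ← map_nsmul, ih, smul_smul, pow_succ]

/-- With surjections `φ_ℓ : A_ℓ → A_{ℓ+1}` having kernel `A_ℓ[p]`, an
isomorphism `ψ : A_{n₁+k} ≃ A_{n₁}` (with `k ≥ 1`, i.e. `n₂ = n₁ + k > n₁`)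
identifies the composite `φ_{n₁,n₂}` with an endomorphism `f` of
`C := A_{n₁}` satisfying `ker (f^[ℓ]) = C[p^{(n₂-n₁)ℓ}]` for all `ℓ ≥ 1`,
and hence `C[p^∞] = C[f^∞]`. -/
theorem stmt_15 {A : ℕ → Type*} [∀ ℓ, AddCommGroup (A ℓ)] (p : ℕ)
    (hp : 1 ≤ p) (φ : ∀ ℓ, A ℓ →+ A (ℓ + 1))
    (hsurj : ∀ ℓ, Function.Surjective (φ ℓ))
    (hker : ∀ ℓ, ∀ x : A ℓ, φ ℓ x = 0 ↔ p • x = 0)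
    (n₁ k : ℕ) (hk : 1 ≤ k) (ψ : A (n₁ + k) ≃+ A n₁)
    (f : A n₁ →+ A n₁) (hf : f = ψ.toAddMonoidHom.comp (compMap φ n₁ k)) :
    (∀ ℓ : ℕ, 1 ≤ ℓ → ∀ x : A n₁, (⇑f)^[ℓ] x = 0 ↔ p ^ (k * ℓ) • x = 0) ∧
    {x : A n₁ | ∃ ℓ : ℕ, p ^ ℓ • x = 0} = {x : A n₁ | ∃ ℓ : ℕ, (⇑f)^[ℓ] x = 0} := by
  have hfker : ∀ x : A n₁, f x = 0 ↔ p ^ k • x = 0 := by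
    intro x
    rw [hf]
    simp only [AddMonoidHom.comp_apply, AddEquiv.coe_toAddMonoidHom]
    rw [← compMap_ker p φ hker n₁ k x]
    constructor
    · intro h
      have := congrArg ψ.symm h
      simpa using this
    · intro h; rw [h]; simp
  have key : ∀ ℓ : ℕ, ∀ x : A n₁, (⇑f)^[ℓ] x = 0 ↔ p ^ (k * ℓ) • x = 0 := by
    intro ℓ
    induction ℓ with
    | zero => intro x; simp
    | succ ℓ ih =>
      intro x
      rw [Function.iterate_succ_apply, ih (f x), ← map_nsmul, hfker,
        smul_smul, ← pow_add]
      ring_nf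
  refine ⟨fun ℓ _ x => key ℓ x, ?_⟩
  ext x
  simp only [Set.mem_setOf_eq]
  constructor
  · rintro ⟨ℓ, hℓ⟩
    refine ⟨ℓ, (key ℓ x).mpr ?_⟩
    have hle : ℓ ≤ k * ℓ := Nat.le_mul_of_pos_left ℓ hk
    rw [← Nat.sub_add_cancel hle, pow_add, mul_smul, hℓ, smul_zero]
  · rintro ⟨ℓ, hℓ⟩
    exact ⟨k * ℓ, (key ℓ x).mp hℓ⟩
end

section
/- Let A be an abelian group with endomorphisms f and g such that g ∘ f = f ∘ g = multiplication by p^r, where f is surjective and ker(f^∘ℓ) = A[p^{rℓ}] for all ℓ. Then A[g^∞] = 0, i.e., if g^∘ℓ(x) = 0 for some ℓ ≥ 0 then x = 0. -/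
/-- If `f, g` are endomorphisms of an abelian group `A` with
`g ∘ f = f ∘ g = [p^r]`, `f` surjective and `ker (f^[ℓ]) = A[p^{rℓ}]` for
all `ℓ ≥ 1`, then `A[g^∞] = 0`: if `g^[ℓ] x = 0` for some `ℓ` then `x = 0`. -/
theorem stmt_16 {A : Type*} [AddCommGroup A] (p r : ℕ) (hp : 1 ≤ p)
    (hr : 1 ≤ r) (f g : A →+ A)
    (hgf : ∀ a : A, g (f a) = p ^ r • a)
    (hfg : ∀ a : A, f (g a) = p ^ r • a)
    (hf : Function.Surjective f)
    (hker : ∀ ℓ : ℕ, 1 ≤ ℓ → ∀ x : A, (⇑f)^[ℓ] x = 0 ↔ p ^ (r * ℓ) • x = 0)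
    (x : A) (ℓ : ℕ) (hx : (⇑g)^[ℓ] x = 0) :
    x = 0 := by
  have hk1 : ∀ y : A, f y = 0 ↔ p ^ r • y = 0 := by
    intro y
    have := hker 1 le_rfl y
    simpa using this
  have hinj : ∀ y : A, g y = 0 → y = 0 := by
    intro y hy
    obtain ⟨z, hz⟩ := hf y
    have h1 : p ^ r • z = 0 := by
      rw [← hgf z, hz, hy]
    have h2 : f z = 0 := (hk1 z).mpr h1
    rw [← hz, h2]
  induction ℓ generalizing x with
  | zero => simpa using hx
  | succ n ih =>
    rw [Function.iterate_succ_apply] at hx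
    exact hinj x (ih (g x) hx)
end
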